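/- Let k ∈ ℝ with k ≠ 0 and k ≠ 1, and let f : ℝⁿ → ℝ be C² on ℝⁿ \ {0} and positively homogeneous of degree k. Let v ≠ 0 with f(v) ≠ 0. Then for a vector X ∈ ℝⁿ the following are equivalent: (i) D²f(v)(X, Y) = 0 for every Y ∈ ℝⁿ; (ii) Df(v)(X) = 0 and D²f(v)(X, Y) = 0 for every Y ∈ ℝⁿ with Df(v)(Y) = 0. -/

import Mathlib

lemma euler_aux {E F : Type*} [NormedAddCommGroup E] [NormedSpace ℝ E]
    [NormedAddCommGroup F] [NormedSpace ℝ F] {g : E → F} {v : E}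
    (hg : DifferentiableAt ℝ g v) (c : ℝ)
    (h : ∀ t : ℝ, 0 < t → g (t • v) = t ^ c • g v) :
    fderiv ℝ g v v = c • g v := by
  have hcurve : HasDerivAt (fun t : ℝ => t • v) v 1 := by
    simpa using (hasDerivAt_id (1:ℝ)).smul_const v
  have h1 : HasDerivAt (fun t : ℝ => g (t • v)) (fderiv ℝ g v v) 1 := by
    have hfd : HasFDerivAt g (fderiv ℝ g v) ((1:ℝ) • v) := by
      simpa using hg.hasFDerivAt
    simpa [Function.comp_def] using hfd.comp_hasDerivAt 1 hcurve
  have h2 : HasDerivAt (fun t : ℝ => t ^ c • g v) (c • g v) 1 := by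
    have := (Real.hasDerivAt_rpow_const (x := 1) (p := c) (Or.inl one_ne_zero)).smul_const (g v)
    simpa using this
  have heq : (fun t : ℝ => g (t • v)) =ᶠ[nhds 1] fun t => t ^ c • g v := by
    filter_upwards [Ioi_mem_nhds (by norm_num : (0:ℝ) < 1)] with t ht using h t ht
  exact ((h2.congr_of_eventuallyEq heq).unique h1).symm

/-- For a `C²` function `f : ℝⁿ → ℝ` away from the origin, positively homogeneous of degree
`k` with `k ≠ 0`, `k ≠ 1`, and a point `v ≠ 0` with `f(v) ≠ 0`, a vector `X` lies in the
kernel of the Hessian `D²f(v)` if and only if `Df(v)(X) = 0` and `D²f(v)(X, Y) = 0` for all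
`Y` with `Df(v)(Y) = 0`.  (Regularity of `Θ₂` is equivalent to regularity of `Θ₂⁰`.) -/
theorem kernel_hessian_iff (n : ℕ) (k : ℝ) (hk0 : k ≠ 0) (hk1 : k ≠ 1)
    (f : (Fin n → ℝ) → ℝ)
    (hf : ContDiffOn ℝ 2 f {x | x ≠ 0})
    (hhom : ∀ t : ℝ, 0 < t → ∀ x : Fin n → ℝ, x ≠ 0 → f (t • x) = t ^ k * f x)
    (v : Fin n → ℝ) (hv : v ≠ 0) (hfv : f v ≠ 0) (X : Fin n → ℝ) :
    (∀ Y : Fin n → ℝ, iteratedFDeriv ℝ 2 f v ![X, Y] = 0) ↔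
      (fderiv ℝ f v X = 0 ∧
        ∀ Y : Fin n → ℝ, fderiv ℝ f v Y = 0 → iteratedFDeriv ℝ 2 f v ![X, Y] = 0) := by
  have hopen : IsOpen {x : Fin n → ℝ | x ≠ 0} := isOpen_ne
  have hca : ∀ x : Fin n → ℝ, x ≠ 0 → ContDiffAt ℝ 2 f x := fun x hx =>
    hf.contDiffAt (hopen.mem_nhds hx)
  have hdf : ∀ x : Fin n → ℝ, x ≠ 0 → DifferentiableAt ℝ f x := fun x hx =>
    (hca x hx).differentiableAt (by norm_num)
  have hdf' : DifferentiableAt ℝ (fderiv ℝ f) v := by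
    have := (hca v hv).fderiv_right (m := 1) (by norm_num)
    exact this.differentiableAt (by norm_num)
  -- Euler identity for f
  have eulerf : fderiv ℝ f v v = k * f v := by
    have := euler_aux (hdf v hv) k (fun t ht => by
      rw [hhom t ht v hv]; simp [smul_eq_mul])
    simpa [smul_eq_mul] using this
  -- homogeneity of the derivative
  have hder : ∀ t : ℝ, 0 < t → fderiv ℝ f (t • v) = t ^ (k - 1) • fderiv ℝ f v := by
    intro t ht
    have htv : t • v ≠ 0 := smul_ne_zero (ne_of_gt ht) hv
    have hF : HasFDerivAt (fun x => f (t • x))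
        ((fderiv ℝ f (t • v)).comp (t • ContinuousLinearMap.id ℝ (Fin n → ℝ))) v :=
      (hdf _ htv).hasFDerivAt.comp v ((hasFDerivAt_id v).const_smul t)
    have hG : HasFDerivAt (fun x => t ^ k * f x) (t ^ k • fderiv ℝ f v) v :=
      (hdf v hv).hasFDerivAt.const_mul (t ^ k)
    have heq : (fun x => t ^ k * f x) =ᶠ[nhds v] fun x => f (t • x) := by
      filter_upwards [hopen.mem_nhds hv] with x hx using (hhom t ht x hx).symm
    have huniq := (hF.congr_of_eventuallyEq heq).unique hG
    have hcomp : (fderiv ℝ f (t • v)).comp (t • ContinuousLinearMap.id ℝ (Fin n → ℝ))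
        = t • fderiv ℝ f (t • v) := by
      ext w; simp [map_smul, smul_eq_mul, mul_comm]
    rw [hcomp] at huniq
    have ht0 : t ≠ 0 := ne_of_gt ht
    have : fderiv ℝ f (t • v) = (t⁻¹ * t ^ k) • fderiv ℝ f v := by
      rw [mul_smul, ← huniq, smul_smul, inv_mul_cancel₀ ht0, one_smul]
    rw [this, ← Real.rpow_neg_one t, ← Real.rpow_add ht, neg_add_eq_sub]
  -- Euler identity for the derivative
  have euler2 : fderiv ℝ (fderiv ℝ f) v v = (k - 1) • fderiv ℝ f v :=
    euler_aux hdf' (k - 1) (fun t ht => hder t ht)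
  have hsym : ∀ a b, fderiv ℝ (fderiv ℝ f) v a b = fderiv ℝ (fderiv ℝ f) v b a :=
    (hca v hv).isSymmSndFDerivAt (by norm_num)
  have hit : ∀ a b : Fin n → ℝ, iteratedFDeriv ℝ 2 f v ![a, b]
      = fderiv ℝ (fderiv ℝ f) v a b := by
    intro a b
    rw [iteratedFDeriv_two_apply]
    simp
  have hXv : ∀ a, fderiv ℝ (fderiv ℝ f) v a v = (k - 1) * fderiv ℝ f v a := by
    intro a
    rw [hsym a v, euler2]; simp [smul_eq_mul]
  constructor
  · intro h
    refine ⟨?_, fun Y _ => h Y⟩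
    have h0 := h v
    rw [hit, hXv] at h0
    have : k - 1 ≠ 0 := sub_ne_zero.mpr hk1
    exact (mul_eq_zero.mp h0).resolve_left this
  · rintro ⟨h1, h2⟩ Y
    set c : ℝ := fderiv ℝ f v Y / (k * f v) with hc
    have hkfv : k * f v ≠ 0 := mul_ne_zero hk0 hfv
    have hY0 : fderiv ℝ f v (Y - c • v) = 0 := by
      rw [map_sub, map_smul, eulerf, smul_eq_mul, hc]
      field_simp
      ring
    have hterm := h2 (Y - c • v) hY0
    rw [hit] at hterm ⊢
    have hdecomp : fderiv ℝ (fderiv ℝ f) v X Y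
        = fderiv ℝ (fderiv ℝ f) v X (Y - c • v) + c * fderiv ℝ (fderiv ℝ f) v X v := by
      rw [map_sub, map_smul, smul_eq_mul]; ring
    rw [hdecomp, hterm, hXv, h1]
    ring
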